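/- The Fermat quartic x⁴ + y⁴ + z⁴ ∈ ℂ[x,y,z] is projectively equivalent over ℂ to the block-type quartic x⁴ + y³z + yz³: there exist an invertible 3×3 complex matrix M and a nonzero constant c ∈ ℂ such that substituting M·(x,y,z)ᵀ for (x,y,z) in x⁴ + y⁴ + z⁴ yields c·(x⁴ + y³z + yz³) as a polynomial identity. -/

import Mathlib

open MvPolynomial

noncomputable def wc : ℂ := (Real.sqrt 2 * Real.sqrt (Real.sqrt 2) : ℝ)
noncomputable def zc : ℂ := (1 + Complex.I) / (Real.sqrt 2 : ℝ)

lemma hw4 : wc ^ 4 = 8 := by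
  have h1 : Real.sqrt 2 ^ 2 = 2 := Real.sq_sqrt (by norm_num)
  have h2 : Real.sqrt (Real.sqrt 2) ^ 2 = Real.sqrt 2 :=
    Real.sq_sqrt (Real.sqrt_nonneg 2)
  have : (Real.sqrt 2 * Real.sqrt (Real.sqrt 2)) ^ 4 = 8 := by
    have : (Real.sqrt 2 * Real.sqrt (Real.sqrt 2)) ^ 4
        = (Real.sqrt 2 ^ 2) ^ 2 * (Real.sqrt (Real.sqrt 2) ^ 2) ^ 2 := by ring
    rw [this, h2, h1]; norm_num
  unfold wc
  exact_mod_cast congrArg (Complex.ofReal ·) this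

lemma hz4 : zc ^ 4 = -1 := by
  have h1 : (Real.sqrt 2 : ℂ) ^ 2 = 2 := by
    norm_cast
    exact_mod_cast Real.sq_sqrt (by norm_num : (2:ℝ) ≥ 0).le
  have hne : (Real.sqrt 2 : ℂ) ≠ 0 := by
    intro h
    simp [h] at h1
  have h2 : zc ^ 2 = Complex.I := by
    unfold zc
    field_simp
    rw [h1]
    ring_nf
    rw [Complex.I_sq]
    ring
  have : zc ^ 4 = (zc ^ 2) ^ 2 := by ring
  rw [this, h2, Complex.I_sq]

lemma hzne : zc ≠ 0 := by
  intro h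
  have := hz4
  rw [h] at this
  norm_num at this

lemma hwne : wc ≠ 0 := by
  intro h
  have := hw4
  rw [h] at this
  norm_num at this

theorem fermat_quartic_equiv_block_quartic :
    ∃ (M : Matrix (Fin 3) (Fin 3) ℂ) (c : ℂ), M.det ≠ 0 ∧ c ≠ 0 ∧
      aeval (fun i => ∑ j, C (M i j) * X j)
          (X 0 ^ 4 + X 1 ^ 4 + X 2 ^ 4 : MvPolynomial (Fin 3) ℂ)
        = C c * (X 0 ^ 4 + X 1 ^ 3 * X 2 + X 1 * X 2 ^ 3 : MvPolynomial (Fin 3) ℂ) := by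
  refine ⟨![![wc, 0, 0], ![0, 1, 1], ![0, zc, -zc]], 8, ?_, by norm_num, ?_⟩
  · have h : Matrix.det (![![wc, 0, 0], ![0, 1, 1], ![0, zc, -zc]] : Matrix (Fin 3) (Fin 3) ℂ)
        = -(2 * wc * zc) := by
      erw [Matrix.det_fin_three]
      simp
      ring
    rw [h]
    simp [hwne, hzne]
  · have hw : (C wc : MvPolynomial (Fin 3) ℂ) ^ 4 = 8 := by
      rw [← map_pow, hw4]; simp [map_ofNat]
    have hz : (C zc : MvPolynomial (Fin 3) ℂ) ^ 4 = - 1 := by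
      rw [← map_pow, hz4]; simp
    simp only [map_add, map_pow, aeval_X, Fin.sum_univ_three, Matrix.cons_val_zero,
      Matrix.cons_val_one, Matrix.head_cons, Matrix.cons_val_two, Matrix.tail_cons,
      map_zero, map_one, map_neg, map_mul]
    have hc : (C (8:ℂ) : MvPolynomial (Fin 3) ℂ) = 8 := by simp [map_ofNat]
    rw [hc]
    linear_combination (X 0 : MvPolynomial (Fin 3) ℂ) ^ 4 * hw + ((X 1 : MvPolynomial (Fin 3) ℂ) - X 2) ^ 4 * hz
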